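/- If f : {0,1}^n → {0,1}^n has two distinct fixed points x and y, then the signed interaction graph G(f) contains a positive cycle C such that x_i ≠ y_i for every vertex i of C. -/

import Mathlib

/-- State of a Boolean network with `n` components. -/
abbrev BState (n : ℕ) := Fin n → Bool

/-- Positive arc `j → i` in the global interaction graph `G(f)`:
the discrete partial derivative `f_{ij}` is positive at some state. -/
def posArc {n : ℕ} (f : BState n → BState n) (j i : Fin n) : Prop :=
  ∃ x : BState n, f (Function.update x j true) i = true ∧
    f (Function.update x j false) i = false

/-- Negative arc `j → i` in `G(f)`:
the discrete partial derivative `f_{ij}` is negative at some state. -/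
def negArc {n : ℕ} (f : BState n → BState n) (j i : Fin n) : Prop :=
  ∃ x : BState n, f (Function.update x j true) i = false ∧
    f (Function.update x j false) i = true

/-- Unsigned arc `j → i` in the interaction graph: `f_i` depends on `x_j`. -/
def arc {n : ℕ} (f : BState n → BState n) (j i : Fin n) : Prop :=
  posArc f j i ∨ negArc f j i

/-- Arc of given sign (`true` = positive, `false` = negative). -/
def signedArc {n : ℕ} (f : BState n → BState n) (ε : Bool) (j i : Fin n) : Prop :=
  if ε then posArc f j i else negArc f j i

/-- A signed cycle of `G(f)`: vertices `vert 0 → vert 1 → ⋯ → vert len → vert 0`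
(so the length is `len + 1`), pairwise distinct, each consecutive arc present in
`G(f)` with sign `sign k`. -/
structure SignedCycle {n : ℕ} (f : BState n → BState n) where
  len : ℕ
  vert : Fin (len + 1) → Fin n
  inj : Function.Injective vert
  sign : Fin (len + 1) → Bool
  arcs : ∀ k : Fin (len + 1), signedArc f (sign k) (vert k) (vert (k + 1))

/-- Length (number of arcs) of a signed cycle. -/
def SignedCycle.length {n : ℕ} {f : BState n → BState n} (C : SignedCycle f) : ℕ :=
  C.len + 1

/-- A cycle is positive iff it has an even number of negative arcs. -/
def SignedCycle.Positive {n : ℕ} {f : BState n → BState n} (C : SignedCycle f) : Prop :=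
  Even (Finset.univ.filter (fun k => C.sign k = false)).card

/-- A cycle is negative iff it has an odd number of negative arcs. -/
def SignedCycle.Negative {n : ℕ} {f : BState n → BState n} (C : SignedCycle f) : Prop :=
  Odd (Finset.univ.filter (fun k => C.sign k = false)).card

/-- An unsigned cycle of the interaction graph. -/
structure UCycle {n : ℕ} (f : BState n → BState n) where
  len : ℕ
  vert : Fin (len + 1) → Fin n
  inj : Function.Injective vert
  arcs : ∀ k : Fin (len + 1), arc f (vert k) (vert (k + 1))

/-- One step of the asynchronous dynamics `Γ(f)`. -/
def asyncStep {n : ℕ} (f : BState n → BState n) (x y : BState n) : Prop :=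
  ∃ i : Fin n, f x i ≠ x i ∧ y = Function.update x i (f x i)

/-- There is a path of length `L` from `x` to `y` in `Γ(f)`. -/
def asyncPath {n : ℕ} (f : BState n → BState n) (x y : BState n) (L : ℕ) : Prop :=
  ∃ p : ℕ → BState n, p 0 = x ∧ p L = y ∧ ∀ k < L, asyncStep f (p k) (p (k + 1))

set_option maxHeartbeats 1000000 in
lemma key {n : ℕ} (f : BState n → BState n) (x y : BState n)
    (hx : f x = x) (hy : f y = y) (i : Fin n) (hi : x i ≠ y i) :
    ∃ j : Fin n, x j ≠ y j ∧ signedArc f (y j == y i) j i := by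
  classical
  set ch : ℕ → BState n := fun k j => if (j : ℕ) < k then y j else x j with hch
  have h0 : ch 0 = x := by funext j; simp [hch]
  have hn : ch n = y := by funext j; simp [hch, j.isLt]
  have hP : ∃ k, f (ch (k + 1)) i ≠ x i := by
    refine ⟨n - 1, ?_⟩
    have hn0 : 0 < n := i.pos
    rw [show n - 1 + 1 = n by omega, hn, hy]
    exact fun h => hi h.symm
  set m := Nat.find hP with hm
  have hspec : f (ch (m + 1)) i ≠ x i := Nat.find_spec hP
  have hm0 : f (ch m) i = x i := by
    rcases Nat.eq_zero_or_pos m with h | h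
    · rw [h, h0, hx]
    · have := Nat.find_min hP (show m - 1 < m by omega)
      rw [show m - 1 + 1 = m by omega] at this
      exact not_not.mp this
  have hmn : m < n := by
    by_contra h
    push_neg at h
    have : ch m = ch (m + 1) := by
      funext j
      have : (j : ℕ) < m ∧ (j : ℕ) < m + 1 := ⟨lt_of_lt_of_le j.isLt h, by omega⟩
      simp [hch, this.1, this.2]
    rw [← this, hm0] at hspec; exact hspec rfl
  set jm : Fin n := ⟨m, hmn⟩ with hjm
  have hxyj : x jm ≠ y jm := by
    intro hxyeq
    have : ch m = ch (m + 1) := by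
      funext j
      rcases eq_or_ne (j : ℕ) m with h | h
      · have hj : j = jm := Fin.ext h
        simp [hch, h, hj, hxyeq]
      · have : ((j : ℕ) < m) ↔ ((j : ℕ) < m + 1) := by omega
        simp [hch, this]
    rw [← this, hm0] at hspec; exact hspec rfl
  have e1 : ch (m + 1) = Function.update (ch m) jm (y jm) := by
    funext j
    rcases eq_or_ne j jm with h | h
    · subst h; simp [hch, Function.update_self, hjm]
    · have hne : (j : ℕ) ≠ m := fun hc => h (Fin.ext hc)
      have : ((j : ℕ) < m) ↔ ((j : ℕ) < m + 1) := by omega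
      simp [hch, Function.update_of_ne h, this]
  have e2 : ch m = Function.update (ch m) jm (x jm) := by
    funext j
    rcases eq_or_ne j jm with h | h
    · subst h; simp [hch, Function.update_self, hjm]
    · simp [Function.update_of_ne h]
  have hv : f (ch (m + 1)) i = y i := by
    revert hspec hi
    cases f (ch (m + 1)) i <;> cases x i <;> cases y i <;> simp
  refine ⟨jm, hxyj, ?_⟩
  have h1 : f (Function.update (ch m) jm (y jm)) i = y i := by rw [← e1]; exact hv
  have h2 : f (Function.update (ch m) jm (x jm)) i = x i := by rw [← e2]; exact hm0
  revert hxyj hi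
  cases hyj : y jm <;> cases hxj : x jm <;> cases hyi : y i <;> cases hxi : x i <;>
    simp_all [signedArc, posArc, negArc] <;>
    exact ⟨ch m, by simp_all⟩

lemma parity_even {n m : ℕ} (w : Fin (m + 1) → Fin n) (v : Fin n → Bool) :
    Even (Finset.univ.filter (fun k : Fin (m + 1) => (v (w k) == v (w (k + 1))) = false)).card := by
  classical
  rw [even_iff_two_dvd, ← ZMod.natCast_eq_zero_iff]
  rw [Finset.card_filter, Nat.cast_sum]
  have hterm : ∀ k : Fin (m + 1),
      ((if (v (w k) == v (w (k + 1))) = false then 1 else 0 : ℕ) : ZMod 2)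
        = (if v (w k) then 1 else 0) + (if v (w (k + 1)) then 1 else 0) := by
    intro k
    cases v (w k) <;> cases v (w (k + 1)) <;> simp <;> decide
  rw [Finset.sum_congr rfl (fun k _ => hterm k), Finset.sum_add_distrib]
  have : ∑ k : Fin (m + 1), (if v (w (k + 1)) then (1 : ZMod 2) else 0)
      = ∑ k : Fin (m + 1), (if v (w k) then (1 : ZMod 2) else 0) :=
    Fintype.sum_equiv (Equiv.addRight (1 : Fin (m + 1))) _ _ (fun k => rfl)
  rw [this, CharTwo.add_self_eq_zero]

/-- If `f` has two distinct fixed points `x` and `y`, then `G(f)` has a positive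
cycle all of whose vertices `i` satisfy `x i ≠ y i`. -/
theorem stmt0 {n : ℕ} (f : BState n → BState n) (x y : BState n)
    (hx : f x = x) (hy : f y = y) (hxy : x ≠ y) :
    ∃ C : SignedCycle f, C.Positive ∧ ∀ k, x (C.vert k) ≠ y (C.vert k) := by
  classical
  have hne : ∃ i, x i ≠ y i := by
    by_contra h; push_neg at h; exact hxy (funext h)
  obtain ⟨i₀, hi₀⟩ := hne
  have hcf : ∀ i : Fin n, ∃ j : Fin n,
      x i ≠ y i → (x j ≠ y j ∧ signedArc f (y j == y i) j i) := by
    intro i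
    by_cases h : x i ≠ y i
    · obtain ⟨j, hj⟩ := key f x y hx hy i h; exact ⟨j, fun _ => hj⟩
    · exact ⟨i, fun hc => absurd hc h⟩
  choose g hg using hcf
  have hgP : ∀ i, x i ≠ y i → x (g i) ≠ y (g i) := fun i h => (hg i h).1
  have hgA : ∀ i, x i ≠ y i → signedArc f (y (g i) == y i) (g i) i := fun i h => (hg i h).2
  obtain ⟨a, b, hab, heq⟩ := Finite.exists_ne_map_eq_of_infinite (fun t : ℕ => g^[t] i₀)
  have hitD : ∀ t, x (g^[t] i₀) ≠ y (g^[t] i₀) := by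
    intro t; induction t with
    | zero => exact hi₀
    | succ t ih => rw [Function.iterate_succ_apply']; exact hgP _ ih
  have hper : ∃ s : Fin n, (x s ≠ y s) ∧ ∃ p, 0 < p ∧ g^[p] s = s := by
    rcases hab.lt_or_gt with h | h
    · refine ⟨g^[a] i₀, hitD a, b - a, by omega, ?_⟩
      rw [← Function.iterate_add_apply, show b - a + a = b by omega]
      exact heq.symm
    · refine ⟨g^[b] i₀, hitD b, a - b, by omega, ?_⟩
      rw [← Function.iterate_add_apply, show a - b + b = a by omega]
      exact heq
  obtain ⟨s, hsD, hper⟩ := hper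
  set p := Nat.find hper with hpdef
  obtain ⟨hp0, hps⟩ : 0 < p ∧ g^[p] s = s := Nat.find_spec hper
  have hmin : ∀ q, q < p → ¬(0 < q ∧ g^[q] s = s) := fun q h => Nat.find_min hper h
  have hsit : ∀ t, x (g^[t] s) ≠ y (g^[t] s) := by
    intro t; induction t with
    | zero => exact hsD
    | succ t ih => rw [Function.iterate_succ_apply']; exact hgP _ ih
  have hinj : ∀ t1 t2, t1 < p → t2 < p → g^[t1] s = g^[t2] s → t1 = t2 := by
    have main : ∀ t1 t2, t1 < t2 → t2 < p → g^[t1] s ≠ g^[t2] s := by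
      intro t1 t2 h12 h2 he
      have : g^[p - t2 + t1] s = s := by
        rw [Function.iterate_add_apply, he, ← Function.iterate_add_apply,
          show p - t2 + t2 = p by omega]
        exact hps
      exact hmin (p - t2 + t1) (by omega) ⟨by omega, this⟩
    intro t1 t2 h1 h2 he
    rcases lt_trichotomy t1 t2 with h | h | h
    · exact absurd he (main _ _ h h2)
    · exact h
    · exact absurd he.symm (main _ _ h h1)
  set L := p - 1 with hL
  have hLp : L + 1 = p := by omega
  set vert : Fin (L + 1) → Fin n := fun k => g^[L - (k : ℕ)] s with hvert
  have hvD : ∀ k, x (vert k) ≠ y (vert k) := fun k => hsit _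
  have hgv : ∀ k : Fin (L + 1), g (vert (k + 1)) = vert k := by
    intro k
    rcases eq_or_ne k (Fin.last L) with h | h
    · subst h
      have h1 : ((Fin.last L + 1 : Fin (L + 1)) : ℕ) = 0 := by
        simp [Fin.val_add_one]
      simp only [hvert, h1, Fin.val_last, Nat.sub_zero, Nat.sub_self]
      rw [← Function.iterate_succ_apply' g L s, show L.succ = p by omega]
      simp [hps]
    · have hk : (k : ℕ) < L := by
        have := k.isLt
        rcases lt_or_eq_of_le (Nat.lt_succ_iff.mp this) with h' | h'
        · exact h'
        · exact absurd (Fin.ext h') h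
      have h1 : ((k + 1 : Fin (L + 1)) : ℕ) = (k : ℕ) + 1 := by
        rw [Fin.val_add_one]; simp [h]
      simp only [hvert, h1]
      rw [← Function.iterate_succ_apply' g (L - ((k : ℕ) + 1)) s]
      congr 1
      omega
  have hvinj : Function.Injective vert := by
    intro k k' h
    have h1 : L - (k : ℕ) = L - (k' : ℕ) :=
      hinj _ _ (by omega) (by omega) h
    have hk := k.isLt
    have hk' := k'.isLt
    exact Fin.ext (by omega)
  refine ⟨⟨L, vert, hvinj, fun k => (y (vert k) == y (vert (k + 1))), ?_⟩, ?_, ?_⟩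
  · intro k
    have := hgA (vert (k + 1)) (hvD (k + 1))
    rwa [hgv k] at this
  · exact parity_even vert y
  · exact hvD
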